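/- (Descent property of the singular-value penalized iteration, Gaussian case) Let Θ be a threshold function, λ ≥ 0, and suppose there is L_Θ ∈ [0,1] such that u ↦ sup{t : Θ(t;λ) ≤ u} − (1−L_Θ)u is nondecreasing on (0,∞). Let P be a penalty satisfying condition (constrP) for Θ. Let Y ∈ ℝ^{n×m}, X ∈ ℝ^{n×p}, and set ρ = ‖X‖₂² (squared spectral norm). Suppose ρ < 2 − L_Θ. Starting from any B⁽⁰⁾ ∈ ℝ^{p×m}, define iteratively B⁽ʲ⁺¹⁾ = Θ^σ(B⁽ʲ⁾ + XᵀY − XᵀXB⁽ʲ⁾; λ). Then F(B⁽ʲ⁾) is nonincreasing and for all j ≥ 1, F(B⁽ʲ⁾) − F(B⁽ʲ⁺¹⁾) ≥ (C/2)‖B⁽ʲ⁾ − B⁽ʲ⁺¹⁾‖_F², where F(B) = ‖Y−XB‖_F²/2 + Σ_s P(σ_s(B);λ) and C = 2 − L_Θ − ρ. -/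

import Mathlib

open Matrix MeasureTheory Finset

/-- Squared Frobenius norm of a real matrix. -/
def frobSq {n m : ℕ} (A : Matrix (Fin n) (Fin m) ℝ) : ℝ := ∑ i, ∑ j, A i j ^ 2

/-- `(U, σ, V)` is a (reduced) singular value decomposition of the real `n × m` matrix `B`. -/
def IsSVD {n m k : ℕ} (B : Matrix (Fin n) (Fin m) ℝ) (U : Matrix (Fin n) (Fin k) ℝ)
    (σ : Fin k → ℝ) (V : Matrix (Fin m) (Fin k) ℝ) : Prop :=
  Uᵀ * U = 1 ∧ Vᵀ * V = 1 ∧ Antitone σ ∧ (∀ i, 0 ≤ σ i) ∧ B = U * diagonal σ * Vᵀ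

/-- A threshold function `Θ(t; λ)`. -/
def IsThresholdFunction (Θ : ℝ → ℝ → ℝ) : Prop :=
  ∀ lam : ℝ, 0 ≤ lam →
    (∀ t : ℝ, Θ (-t) lam = -Θ t lam) ∧
    (Monotone fun t => Θ t lam) ∧
    Filter.Tendsto (fun t => Θ t lam) Filter.atTop Filter.atTop ∧
    (∀ t : ℝ, 0 ≤ t → 0 ≤ Θ t lam ∧ Θ t lam ≤ t)

/-- The squared spectral norm `‖X‖₂²` (largest singular value squared) of a real matrix,
defined as the squared operator norm of the induced map `ℓ²(Fin p) → ℓ²(Fin n)`. -/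
noncomputable def spectralNormSq {n p : ℕ} (X : Matrix (Fin n) (Fin p) ℝ) : ℝ :=
  ‖LinearMap.toContinuousLinearMap (Matrix.toEuclideanLin X)‖ ^ 2

lemma theta_zero (Θ : ℝ → ℝ → ℝ) (lam : ℝ)
    (hodd : ∀ t : ℝ, Θ (-t) lam = -Θ t lam) : Θ 0 lam = 0 := by
  have := hodd 0; rw [neg_zero] at this; linarith

lemma set_nonempty (Θ : ℝ → ℝ → ℝ) (lam : ℝ)
    (hodd : ∀ t : ℝ, Θ (-t) lam = -Θ t lam) {u : ℝ} (hu : 0 ≤ u) :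
    Set.Nonempty {s : ℝ | Θ s lam ≤ u} :=
  ⟨0, by simp [Set.mem_setOf_eq, theta_zero Θ lam hodd, hu]⟩

lemma set_bddAbove (Θ : ℝ → ℝ → ℝ) (lam : ℝ)
    (htop : Filter.Tendsto (fun t => Θ t lam) Filter.atTop Filter.atTop)
    (u : ℝ) : BddAbove {s : ℝ | Θ s lam ≤ u} := by
  obtain ⟨M, hM⟩ := Filter.eventually_atTop.mp (Filter.tendsto_atTop.mp htop (u + 1))
  refine ⟨M, fun s hs => ?_⟩
  by_contra hc
  push_neg at hc
  have := hM s hc.le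
  have : Θ s lam ≤ u := hs
  linarith [hM s hc.le]

lemma hfun_mono (Θ : ℝ → ℝ → ℝ) (lam : ℝ)
    (hodd : ∀ t : ℝ, Θ (-t) lam = -Θ t lam)
    (htop : Filter.Tendsto (fun t => Θ t lam) Filter.atTop Filter.atTop) :
    MonotoneOn (fun u => sSup {s : ℝ | Θ s lam ≤ u}) (Set.Ici 0) := by
  intro u hu v hv huv
  exact csSup_le_csSup (set_bddAbove Θ lam htop v) (set_nonempty Θ lam hodd hu)
    (fun s hs => le_trans hs huv)

set_option maxHeartbeats 800000 in
lemma scalar_key (Θ : ℝ → ℝ → ℝ) (lam : ℝ)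
    (hodd : ∀ t : ℝ, Θ (-t) lam = -Θ t lam)
    (hmono : Monotone fun t => Θ t lam)
    (htop : Filter.Tendsto (fun t => Θ t lam) Filter.atTop Filter.atTop)
    (hrange : ∀ t : ℝ, 0 ≤ t → 0 ≤ Θ t lam ∧ Θ t lam ≤ t)
    (L : ℝ) (hL0 : 0 ≤ L) (hL1 : L ≤ 1)
    (hLmono : ∀ u v : ℝ, 0 < u → u ≤ v →
      sSup {s : ℝ | Θ s lam ≤ u} - (1 - L) * u ≤ sSup {s : ℝ | Θ s lam ≤ v} - (1 - L) * v)
    (P q : ℝ → ℝ) (hq : ∀ θ, 0 ≤ q θ) (hqΘ : ∀ t, q (Θ t lam) = 0)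
    (hP : ∀ θ : ℝ, P θ - P 0 = (∫ u in (0:ℝ)..|θ|, (sSup {s : ℝ | Θ s lam ≤ u} - u)) + q θ)
    (y θ : ℝ) (hy : 0 ≤ y) (hθ : 0 ≤ θ) :
    (Θ y lam - y)^2/2 - (θ - y)^2/2 + (1-L)/2 * (θ - Θ y lam)^2 ≤ P θ - P (Θ y lam) := by
  set h : ℝ → ℝ := fun u => sSup {s : ℝ | Θ s lam ≤ u} with hh
  set th : ℝ := Θ y lam with hth
  have hth0 : 0 ≤ th := (hrange y hy).1
  have hthy : th ≤ y := (hrange y hy).2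
  -- integrability of h on nonneg intervals
  have hInt : ∀ a b : ℝ, 0 ≤ a → 0 ≤ b → IntervalIntegrable (fun u => h u - u) volume a b := by
    intro a b ha hb
    have hm : MonotoneOn h (Set.uIcc a b) := by
      intro u hu v hv huv
      have h0 : (0:ℝ) ≤ min a b := le_min ha hb
      exact hfun_mono Θ lam hodd htop (le_trans h0 hu.1) (le_trans h0 hv.1) huv
    exact (hm.intervalIntegrable).sub intervalIntegral.intervalIntegrable_id
  -- the difference of penalties
  have hPdiff : P θ - P th = (∫ u in th..θ, (h u - u)) + q θ := by
    have h1 := hP θ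
    have h2 := hP th
    rw [abs_of_nonneg hθ] at h1
    rw [abs_of_nonneg hth0] at h2
    rw [hqΘ y] at h2
    have h3 : P θ - P th = (∫ u in (0:ℝ)..θ, (h u - u)) - (∫ u in (0:ℝ)..th, (h u - u)) + q θ := by
      simp only [hh]; linarith
    rw [h3, intervalIntegral.integral_interval_sub_left (hInt 0 θ le_rfl hθ) (hInt 0 th le_rfl hth0)]
  -- the key integrand bound
  set g : ℝ → ℝ := fun u => h u - y - (1 - L) * (u - th) with hg
  have hIntg : IntervalIntegrable g volume th θ := by
    have : g = fun u => (h u - u) - ((y + (1-L)*(u - th)) - u) := by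
      funext u; simp only [hg]; ring
    rw [this]
    exact (hInt th θ hth0 hθ).sub (((continuous_const.add ((continuous_const.mul
      (continuous_id.sub continuous_const)))).sub continuous_id).intervalIntegrable _ _)
  have hsplit : (∫ u in th..θ, (h u - u)) = (∫ u in th..θ, g u)
      + ((y - (1-L)*th) * (θ - th) + (-L) * ((θ^2 - th^2)/2)) := by
    have e1 : ∀ u : ℝ, h u - u = g u + ((y - (1-L)*th) + (-L) * u) := by
      intro u; simp only [hg]; ring
    rw [intervalIntegral.integral_congr (fun u _ => e1 u)]
    rw [intervalIntegral.integral_add (f := g) (g := fun u => (y - (1-L)*th) + (-L) * u)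
      hIntg (Continuous.intervalIntegrable (by continuity) _ _)]
    congr 1
    have : (∫ u in th..θ, ((y - (1-L)*th) + (-L) * u))
        = (∫ u in th..θ, (y - (1-L)*th)) + (-L) * (∫ u in th..θ, u) := by
      rw [← intervalIntegral.integral_const_mul]
      exact intervalIntegral.integral_add (intervalIntegrable_const)
        (Continuous.intervalIntegrable (by continuity) _ _)
    rw [this, intervalIntegral.integral_const, integral_id]
    simp [smul_eq_mul]; ring
  -- key: the integral of g is ≥ -q θ
  have hkey : 0 ≤ (∫ u in th..θ, g u) + q θ := by
    rcases le_or_gt th θ with hc | hc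
    · have : 0 ≤ ∫ u in th..θ, g u := by
        rw [intervalIntegral.integral_of_le hc]
        apply setIntegral_nonneg measurableSet_Ioc
        intro u hu
        -- u ∈ Ioc th θ, so th < u
        have hu1 : th < u := hu.1
        have hup : 0 < u := lt_of_le_of_lt hth0 hu1
        have hyle : y - (1-L)*th ≤ h u - (1-L)*u := by
          rcases eq_or_lt_of_le hth0 with he | hpos
          · -- th = 0
            have base : ∀ ε : ℝ, 0 < ε → ε ≤ u → y - (1-L)*ε ≤ h u - (1-L)*u := by
              intro ε hε hεu
              have h1 := hLmono ε u hε hεu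
              have h2 : y ≤ h ε := le_csSup (set_bddAbove Θ lam htop ε)
                (by simp only [Set.mem_setOf_eq, ← hth, ← he]; exact hε.le)
              simp only [hh] at h1 ⊢; linarith
            rw [← he]
            have : y ≤ h u - (1-L)*u := by
              refine le_of_forall_pos_le_add (fun δ hδ => ?_)
              have hε : 0 < min u δ := lt_min hup hδ
              have := base (min u δ) hε (min_le_left _ _)
              have h1L : (1-L) * min u δ ≤ δ := by
                have : min u δ ≤ δ := min_le_right _ _
                nlinarith
              linarith
            linarith
          · have h1 := hLmono th u hpos hu1.le
            have h2 : y ≤ h th := le_csSup (set_bddAbove Θ lam htop th)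
              (by simp only [Set.mem_setOf_eq, ← hth]; exact le_rfl)
            simp only [hh] at h1 ⊢; linarith
        simp only [hg]; linarith
      linarith [hq θ]
    · -- θ < th
      have : (∫ u in θ..th, g u) ≤ 0 := by
        rw [intervalIntegral.integral_of_le hc.le, integral_Ioc_eq_integral_Ioo]
        apply setIntegral_nonpos measurableSet_Ioo
        intro u hu
        have hup : 0 < u := lt_of_le_of_lt hθ hu.1
        have hband : h u - (1-L)*u ≤ y - (1-L)*th := by
          refine le_of_forall_pos_le_add (fun δ hδ => ?_)
          set w : ℝ := max ((u+th)/2) (th - δ) with hw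
          have hw1 : u < w := lt_of_lt_of_le (by linarith [hu.2]) (le_max_left _ _)
          have hw2 : w < th := max_lt (by linarith [hu.2]) (by linarith)
          have hw3 : th - w ≤ δ := by
            have : th - δ ≤ w := le_max_right _ _
            linarith
          have h1 := hLmono u w hup hw1.le
          have h2 : h w ≤ y := by
            apply Real.sSup_le _ hy
            intro s hs
            by_contra hsy
            push_neg at hsy
            have : Θ y lam ≤ Θ s lam := hmono hsy.le
            have : Θ s lam ≤ w := hs
            linarith [hw2]
          simp only [hh] at h1 ⊢
          nlinarith
        simp only [hg]; linarith
      have := intervalIntegral.integral_symm (a := θ) (b := th) (f := g) (μ := volume)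
      have hq' := hq θ
      rw [show (∫ u in th..θ, g u) = -(∫ u in θ..th, g u) from intervalIntegral.integral_symm θ th]
      linarith
  -- conclude
  rw [hPdiff, hsplit]
  nlinarith [hkey]



def finner {a b : ℕ} (A B : Matrix (Fin a) (Fin b) ℝ) : ℝ := ∑ i, ∑ j, A i j * B i j

lemma finner_comm {a b : ℕ} (A B : Matrix (Fin a) (Fin b) ℝ) : finner A B = finner B A := by
  simp [finner, mul_comm]

lemma frobSq_eq_finner {a b : ℕ} (A : Matrix (Fin a) (Fin b) ℝ) : frobSq A = finner A A := by
  simp [frobSq, finner, sq]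

lemma frobSq_sub {a b : ℕ} (A B : Matrix (Fin a) (Fin b) ℝ) :
    frobSq (A - B) = frobSq A - 2 * finner A B + frobSq B := by
  simp only [frobSq, finner, Matrix.sub_apply, Finset.mul_sum]
  rw [← Finset.sum_sub_distrib, ← Finset.sum_add_distrib]
  refine Finset.sum_congr rfl (fun i _ => ?_)
  rw [← Finset.sum_sub_distrib, ← Finset.sum_add_distrib]
  exact Finset.sum_congr rfl (fun j _ => by ring)

lemma frobSq_sub_comm {a b : ℕ} (A B : Matrix (Fin a) (Fin b) ℝ) :
    frobSq (A - B) = frobSq (B - A) := by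
  rw [frobSq_sub, frobSq_sub, finner_comm]; ring

lemma finner_sub_smul_right {a b : ℕ} (A B C : Matrix (Fin a) (Fin b) ℝ) (c : ℝ) :
    finner A (B - c • C) = finner A B - c * finner A C := by
  simp only [finner, Matrix.sub_apply, Matrix.smul_apply, smul_eq_mul, Finset.mul_sum]
  rw [← Finset.sum_sub_distrib]
  refine Finset.sum_congr rfl (fun i _ => ?_)
  rw [← Finset.sum_sub_distrib]
  exact Finset.sum_congr rfl (fun j _ => by ring)

lemma finner_trace {a b : ℕ} (A B : Matrix (Fin a) (Fin b) ℝ) :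
    finner A B = Matrix.trace (Aᵀ * B) := by
  simp only [finner, Matrix.trace, Matrix.diag, mul_apply, transpose_apply]
  rw [Finset.sum_comm]

lemma finner_adjoint {a b c : ℕ} (X : Matrix (Fin a) (Fin b) ℝ)
    (M : Matrix (Fin a) (Fin c) ℝ) (N : Matrix (Fin b) (Fin c) ℝ) :
    finner M (X * N) = finner (Xᵀ * M) N := by
  rw [finner_trace, finner_trace, transpose_mul, transpose_transpose, ← Matrix.mul_assoc]

/-- entries of U * diagonal d * Vᵀ -/
lemma svd_entry {a b k : ℕ} (U : Matrix (Fin a) (Fin k) ℝ) (d : Fin k → ℝ)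
    (V : Matrix (Fin b) (Fin k) ℝ) (x : Fin a) (y : Fin b) :
    (U * diagonal d * Vᵀ) x y = ∑ i, U x i * d i * V y i := by
  rw [mul_apply]
  simp only [mul_diagonal, transpose_apply]

/-- the fundamental inner-product formula for two SVD-form matrices -/
lemma finner_svd {a b k : ℕ} (U U' : Matrix (Fin a) (Fin k) ℝ) (V V' : Matrix (Fin b) (Fin k) ℝ)
    (d e : Fin k → ℝ) :
    finner (U * diagonal d * Vᵀ) (U' * diagonal e * V'ᵀ)
      = ∑ i, ∑ j, d i * e j * ((Uᵀ * U') i j * (Vᵀ * V') i j) := by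
  rw [finner_trace]
  set Q : Matrix (Fin k) (Fin k) ℝ := Uᵀ * U' with hQ
  set S : Matrix (Fin k) (Fin k) ℝ := V'ᵀ * V with hS
  have e1 : (U * diagonal d * Vᵀ)ᵀ * (U' * diagonal e * V'ᵀ)
      = V * (diagonal d * (Q * (diagonal e * V'ᵀ))) := by
    rw [hQ]
    simp only [transpose_mul, transpose_transpose, diagonal_transpose, Matrix.mul_assoc]
  have e2 : diagonal d * (Q * (diagonal e * V'ᵀ)) * V = diagonal d * (Q * (diagonal e * S)) := by
    rw [hS]
    simp only [Matrix.mul_assoc]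
  rw [e1, Matrix.trace_mul_comm, e2]
  have hent : ∀ i, (diagonal d * (Q * (diagonal e * S))) i i
      = ∑ j, d i * (Q i j * (e j * S j i)) := by
    intro i
    rw [diagonal_mul, mul_apply, Finset.mul_sum]
    refine Finset.sum_congr rfl (fun j _ => ?_)
    rw [diagonal_mul]
  have hRS : ∀ (i j : Fin k), S j i = (Vᵀ * V') i j := by
    intro i j; simp [hS, mul_apply, transpose_apply, mul_comm]
  simp only [Matrix.trace, Matrix.diag]
  rw [Finset.sum_congr rfl (fun i (_ : i ∈ Finset.univ) => hent i)]
  refine Finset.sum_congr rfl (fun i _ => Finset.sum_congr rfl (fun j _ => ?_))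
  rw [hRS]
  ring

lemma frobSq_svd {a b k : ℕ} (U : Matrix (Fin a) (Fin k) ℝ) (V : Matrix (Fin b) (Fin k) ℝ)
    (d : Fin k → ℝ) (hU : Uᵀ * U = 1) (hV : Vᵀ * V = 1) :
    frobSq (U * diagonal d * Vᵀ) = ∑ i, d i ^ 2 := by
  rw [frobSq_eq_finner, finner_svd, hU, hV]
  simp only [one_apply]
  refine Finset.sum_congr rfl (fun i _ => ?_)
  rw [Finset.sum_eq_single i]
  · simp [sq]
  · intro j _ hj; simp [Ne.symm hj]
  · simp

/-- inner product of two SVD-form matrices with the same frames -/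
lemma finner_svd_same {a b k : ℕ} (U : Matrix (Fin a) (Fin k) ℝ) (V : Matrix (Fin b) (Fin k) ℝ)
    (d e : Fin k → ℝ) (hU : Uᵀ * U = 1) (hV : Vᵀ * V = 1) :
    finner (U * diagonal d * Vᵀ) (U * diagonal e * Vᵀ) = ∑ i, d i * e i := by
  rw [finner_svd, hU, hV]
  simp only [one_apply]
  refine Finset.sum_congr rfl (fun i _ => ?_)
  rw [Finset.sum_eq_single i]
  · simp
  · intro j _ hj; simp [Ne.symm hj]
  · simp

/-- rows of Uᵀ * U' have squared norm ≤ 1, for orthonormal-column frames -/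
lemma row_norm_le {a k : ℕ} (U U' : Matrix (Fin a) (Fin k) ℝ)
    (hU : Uᵀ * U = 1) (hU' : U'ᵀ * U' = 1) (i : Fin k) :
    ∑ j, ((Uᵀ * U') i j) ^ 2 ≤ 1 := by
  set c : Fin k → ℝ := fun j => ∑ x, U x i * U' x j with hc
  have hcq : ∀ j, (Uᵀ * U') i j = c j := by
    intro j; simp [mul_apply, transpose_apply, hc]
  have huu : ∑ x, U x i * U x i = 1 := by
    have := congrFun (congrFun hU i) i
    simp only [mul_apply, transpose_apply, one_apply_eq] at this
    exact this
  have horth : ∀ j l : Fin k, ∑ x, U' x j * U' x l = if j = l then (1:ℝ) else 0 := by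
    intro j l
    have := congrFun (congrFun hU' j) l
    simp only [mul_apply, transpose_apply, one_apply] at this
    exact this
  set w : Fin a → ℝ := fun x => ∑ j, c j * U' x j with hw
  have hcj : ∀ j, c j = ∑ x, U x i * U' x j := fun j => rfl
  have huw : ∑ x, U x i * w x = ∑ j, c j ^ 2 := by
    simp only [hw, Finset.mul_sum]
    rw [Finset.sum_comm]
    refine Finset.sum_congr rfl (fun j _ => ?_)
    calc ∑ x, U x i * (c j * U' x j) = c j * ∑ x, U x i * U' x j := by
          rw [Finset.mul_sum]
          exact Finset.sum_congr rfl (fun x _ => by ring)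
      _ = c j ^ 2 := by rw [← hcj, sq]
  have hww : ∑ x, w x * w x = ∑ j, c j ^ 2 := by
    calc ∑ x, w x * w x
        = ∑ x, ∑ j, ∑ l, (c j * U' x j) * (c l * U' x l) := by
          refine Finset.sum_congr rfl (fun x _ => ?_)
          exact Finset.sum_mul_sum _ _ _ _
      _ = ∑ j, ∑ x, ∑ l, (c j * U' x j) * (c l * U' x l) := Finset.sum_comm
      _ = ∑ j, ∑ l, c j * c l * ∑ x, U' x j * U' x l := by
          refine Finset.sum_congr rfl (fun j _ => ?_)
          rw [Finset.sum_comm]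
          refine Finset.sum_congr rfl (fun l _ => ?_)
          rw [Finset.mul_sum]
          exact Finset.sum_congr rfl (fun x _ => by ring)
      _ = ∑ j, c j ^ 2 := by
          refine Finset.sum_congr rfl (fun j _ => ?_)
          rw [Finset.sum_eq_single j]
          · rw [horth j j]; simp [sq]
          · intro l _ hl; rw [horth j l]; simp [Ne.symm hl]
          · simp
  have hpos : 0 ≤ ∑ x, (U x i - w x) ^ 2 :=
    Finset.sum_nonneg (fun x _ => sq_nonneg _)
  have hexp : ∑ x, (U x i - w x) ^ 2
      = (∑ x, U x i * U x i) - 2 * (∑ x, U x i * w x) + ∑ x, w x * w x := by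
    rw [Finset.mul_sum, ← Finset.sum_sub_distrib, ← Finset.sum_add_distrib]
    exact Finset.sum_congr rfl (fun x _ => by ring)
  have : ∑ j, c j ^ 2 ≤ 1 := by
    rw [hexp, huu, huw, hww] at hpos; linarith
  calc ∑ j, ((Uᵀ * U') i j)^2 = ∑ j, c j ^2 :=
        Finset.sum_congr rfl (fun j _ => by rw [hcq])
    _ ≤ 1 := this

lemma mulVec_sq_le {n p : ℕ} (X : Matrix (Fin n) (Fin p) ℝ) (v : Fin p → ℝ) :
    ∑ i, (X.mulVec v i) ^ 2 ≤ spectralNormSq X * ∑ t, (v t) ^ 2 := by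
  set T := LinearMap.toContinuousLinearMap (Matrix.toEuclideanLin X) with hT
  set v' : EuclideanSpace ℝ (Fin p) := (WithLp.equiv 2 (Fin p → ℝ)).symm v with hv'
  have happ : ∀ i, (T v') i = X.mulVec v i := by
    intro i
    rfl
  have hb : ‖T v'‖ ≤ ‖T‖ * ‖v'‖ := T.le_opNorm v'
  have hsq : ‖T v'‖^2 ≤ ‖T‖^2 * ‖v'‖^2 := by
    rw [← mul_pow]
    exact pow_le_pow_left₀ (norm_nonneg _) hb 2
  have h1 : ‖T v'‖^2 = ∑ i, (X.mulVec v i)^2 := by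
    rw [EuclideanSpace.norm_eq, Real.sq_sqrt (Finset.sum_nonneg fun i _ => sq_nonneg _)]
    refine Finset.sum_congr rfl (fun i _ => ?_)
    rw [happ, Real.norm_eq_abs, sq_abs]
  have h2 : ‖v'‖^2 = ∑ t, (v t)^2 := by
    rw [EuclideanSpace.norm_eq, Real.sq_sqrt (Finset.sum_nonneg fun i _ => sq_nonneg _)]
    refine Finset.sum_congr rfl (fun t _ => ?_)
    rw [Real.norm_eq_abs, sq_abs]
    rfl
  rw [spectralNormSq, ← hT]
  rw [h1, h2] at hsq
  exact hsq

lemma frobSq_mul_le {n p m : ℕ} (X : Matrix (Fin n) (Fin p) ℝ) (A : Matrix (Fin p) (Fin m) ℝ) :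
    frobSq (X * A) ≤ spectralNormSq X * frobSq A := by
  have h1 : frobSq (X * A) = ∑ j, ∑ i, ((X * A) i j)^2 := Finset.sum_comm
  have h2 : frobSq A = ∑ j, ∑ t, (A t j)^2 := Finset.sum_comm
  rw [h1, h2, Finset.mul_sum]
  refine Finset.sum_le_sum (fun j _ => ?_)
  have : ∀ i, (X * A) i j = X.mulVec (fun t => A t j) i := by
    intro i; rw [mul_apply]; rfl
  calc ∑ i, ((X * A) i j)^2 = ∑ i, (X.mulVec (fun t => A t j) i)^2 :=
        Finset.sum_congr rfl (fun i _ => by rw [this])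
    _ ≤ spectralNormSq X * ∑ t, (A t j)^2 := mulVec_sq_le X _
open Finset

lemma abel_step (k : ℕ) (b : ℕ → ℝ) (hbk : b k = 0) (F : ℕ → ℝ) :
    ∑ i ∈ range k, b i * F i
      = ∑ r ∈ range k, (b r - b (r+1)) * ∑ i ∈ range (r+1), F i := by
  have htel : ∀ i ∈ range k, b i * F i = ∑ r ∈ Finset.Ico i k, (b r - b (r+1)) * F i := by
    intro i hi
    rw [← Finset.sum_mul]
    congr 1
    rw [Finset.sum_Ico_eq_sub _ (mem_range.mp hi).le,
      Finset.sum_range_sub' b, Finset.sum_range_sub' b, hbk]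
    ring
  rw [Finset.sum_congr rfl htel]
  rw [Finset.sum_comm' (t' := range k) (s' := fun r => range (r+1))
    (by intro i r
        simp only [mem_range, Finset.mem_Ico]
        omega)]
  congr 1; funext r
  rw [Finset.mul_sum]

lemma substoch_nat (k : ℕ) (b w : ℕ → ℝ) (D : ℕ → ℕ → ℝ)
    (hδ : ∀ r, 0 ≤ b r - b (r+1)) (hε : ∀ r, 0 ≤ w r - w (r+1))
    (hbk : b k = 0) (hwk : w k = 0)
    (hD0 : ∀ i j, 0 ≤ D i j)
    (hrow : ∀ i, i < k → ∑ j ∈ range k, D i j ≤ 1)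
    (hcol : ∀ j, j < k → ∑ i ∈ range k, D i j ≤ 1) :
    ∑ i ∈ range k, ∑ j ∈ range k, b i * w j * D i j ≤ ∑ i ∈ range k, b i * w i := by
  -- LHS transformation
  have hL : ∑ i ∈ range k, ∑ j ∈ range k, b i * w j * D i j
      = ∑ r ∈ range k, ∑ s ∈ range k, (b r - b (r+1)) * ((w s - w (s+1)) *
          ∑ j ∈ range (s+1), ∑ i ∈ range (r+1), D i j) := by
    have e1 : ∀ i, ∑ j ∈ range k, b i * w j * D i j = b i * ∑ j ∈ range k, w j * D i j := by
      intro i; rw [Finset.mul_sum]; congr 1; funext j; ring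
    simp only [e1]
    rw [abel_step k b hbk]
    congr 1; funext r
    have swap : ∑ i ∈ range (r+1), ∑ j ∈ range k, w j * D i j
        = ∑ j ∈ range k, w j * ∑ i ∈ range (r+1), D i j := by
      rw [Finset.sum_comm]
      congr 1; funext j
      rw [Finset.mul_sum]
    rw [swap, abel_step k w hwk, Finset.mul_sum]
  -- RHS transformation
  have hR : ∑ i ∈ range k, b i * w i
      = ∑ r ∈ range k, ∑ s ∈ range k, (b r - b (r+1)) * ((w s - w (s+1)) *
          (min (r+1) (s+1) : ℕ)) := by
    rw [abel_step k b hbk w]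
    refine Finset.sum_congr rfl (fun r hr => ?_)
    have hrk := mem_range.mp hr
    have htelw : ∀ i ∈ range (r+1), w i = ∑ s ∈ Finset.Ico i k, (w s - w (s+1)) := by
      intro i hi
      have hik : i < k := lt_of_lt_of_le (mem_range.mp hi) hrk
      rw [Finset.sum_Ico_eq_sub _ hik.le, Finset.sum_range_sub' w, Finset.sum_range_sub' w, hwk]
      ring
    rw [Finset.sum_congr rfl htelw]
    rw [Finset.sum_comm' (t' := range k) (s' := fun s => range (min (r+1) (s+1)))
      (by intro i s
          simp only [mem_range, Finset.mem_Ico, lt_min_iff]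
          omega)]
    rw [Finset.mul_sum]
    refine Finset.sum_congr rfl (fun s hs => ?_)
    rw [Finset.sum_const, card_range, nsmul_eq_mul]
    ring
  rw [hL, hR]
  refine Finset.sum_le_sum (fun r hr => Finset.sum_le_sum (fun s hs => ?_))
  have hrk := mem_range.mp hr
  have hsk := mem_range.mp hs
  refine mul_le_mul_of_nonneg_left (mul_le_mul_of_nonneg_left ?_ (hε s)) (hδ r)
  -- T r s ≤ min (r+1) (s+1)
  have hT1 : ∑ j ∈ range (s+1), ∑ i ∈ range (r+1), D i j ≤ (s+1 : ℝ) := by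
    calc ∑ j ∈ range (s+1), ∑ i ∈ range (r+1), D i j
        ≤ ∑ j ∈ range (s+1), (1:ℝ) := by
          refine Finset.sum_le_sum (fun j hj => ?_)
          have hjk : j < k := lt_of_lt_of_le (mem_range.mp hj) hsk
          calc ∑ i ∈ range (r+1), D i j
              ≤ ∑ i ∈ range k, D i j :=
                Finset.sum_le_sum_of_subset_of_nonneg
                  (Finset.range_subset_range.mpr hrk) (fun i _ _ => hD0 i j)
            _ ≤ 1 := hcol j hjk
      _ = (s+1 : ℝ) := by simp
  have hT2 : ∑ j ∈ range (s+1), ∑ i ∈ range (r+1), D i j ≤ (r+1 : ℝ) := by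
    rw [Finset.sum_comm]
    calc ∑ i ∈ range (r+1), ∑ j ∈ range (s+1), D i j
        ≤ ∑ i ∈ range (r+1), (1:ℝ) := by
          refine Finset.sum_le_sum (fun i hi => ?_)
          have hik : i < k := lt_of_lt_of_le (mem_range.mp hi) hrk
          calc ∑ j ∈ range (s+1), D i j
              ≤ ∑ j ∈ range k, D i j :=
                Finset.sum_le_sum_of_subset_of_nonneg
                  (Finset.range_subset_range.mpr hsk) (fun j _ _ => hD0 i j)
            _ ≤ 1 := hrow i hik
      _ = (r+1 : ℝ) := by simp
  have hmin : (((r + 1) ⊓ (s + 1) : ℕ) : ℝ) = ((r:ℝ)+1) ⊓ ((s:ℝ)+1) := by push_cast; ring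
  rw [hmin]
  exact le_min hT2 hT1

lemma vonNeumann {a b k : ℕ} (U U' : Matrix (Fin a) (Fin k) ℝ) (V V' : Matrix (Fin b) (Fin k) ℝ)
    (d e : Fin k → ℝ) (hU : Uᵀ*U = 1) (hU' : U'ᵀ*U' = 1) (hV : Vᵀ*V = 1) (hV' : V'ᵀ*V' = 1)
    (hd : Antitone d) (he : Antitone e) (hd0 : ∀ i, 0 ≤ d i) (he0 : ∀ i, 0 ≤ e i) :
    finner (U * diagonal d * Vᵀ) (U' * diagonal e * V'ᵀ) ≤ ∑ i, d i * e i := by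
  rw [finner_svd]
  set Q : Matrix (Fin k) (Fin k) ℝ := Uᵀ * U' with hQ
  set R : Matrix (Fin k) (Fin k) ℝ := Vᵀ * V' with hR
  have step1 : ∑ i, ∑ j, d i * e j * (Q i j * R i j)
      ≤ ∑ i, ∑ j, d i * e j * ((Q i j ^ 2 + R i j ^ 2) / 2) := by
    refine Finset.sum_le_sum (fun i _ => Finset.sum_le_sum (fun j _ => ?_))
    refine mul_le_mul_of_nonneg_left ?_ (mul_nonneg (hd0 i) (he0 j))
    nlinarith [sq_nonneg (Q i j - R i j)]
  refine le_trans step1 ?_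
  -- extended functions
  set d' : ℕ → ℝ := fun i => if h : i < k then d ⟨i, h⟩ else 0 with hd'
  set e' : ℕ → ℝ := fun i => if h : i < k then e ⟨i, h⟩ else 0 with he'
  set D : ℕ → ℕ → ℝ := fun i j =>
    if h : i < k then (if h' : j < k then (Q ⟨i, h⟩ ⟨j, h'⟩ ^ 2 + R ⟨i, h⟩ ⟨j, h'⟩ ^ 2) / 2 else 0)
    else 0 with hD
  have hLHS : ∑ i, ∑ j, d i * e j * ((Q i j ^ 2 + R i j ^ 2) / 2)
      = ∑ i ∈ Finset.range k, ∑ j ∈ Finset.range k, d' i * e' j * D i j := by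
    rw [← Fin.sum_univ_eq_sum_range (fun i => ∑ j ∈ Finset.range k, d' i * e' j * D i j) k]
    refine Finset.sum_congr rfl (fun i _ => ?_)
    rw [← Fin.sum_univ_eq_sum_range (fun j => d' i * e' j * D i j) k]
    refine Finset.sum_congr rfl (fun j _ => ?_)
    simp only [hd', he', hD, dif_pos i.isLt, dif_pos j.isLt, Fin.eta]
  have hRHS : ∑ i, d i * e i = ∑ i ∈ Finset.range k, d' i * e' i := by
    rw [← Fin.sum_univ_eq_sum_range (fun i => d' i * e' i) k]
    refine Finset.sum_congr rfl (fun i _ => ?_)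
    simp only [hd', he', dif_pos i.isLt, Fin.eta]
  rw [hLHS, hRHS]
  apply substoch_nat
  · intro r
    by_cases hr1 : r + 1 < k
    · have hr : r < k := by omega
      simp only [hd', dif_pos hr1, dif_pos hr]
      have : (⟨r, hr⟩ : Fin k) ≤ ⟨r+1, hr1⟩ := by simp [Fin.le_def]
      linarith [hd this]
    · by_cases hr : r < k
      · simp only [hd', dif_pos hr, dif_neg hr1]
        linarith [hd0 ⟨r, hr⟩]
      · simp only [hd', dif_neg hr, dif_neg hr1]; linarith
  · intro r
    by_cases hr1 : r + 1 < k
    · have hr : r < k := by omega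
      simp only [he', dif_pos hr1, dif_pos hr]
      have : (⟨r, hr⟩ : Fin k) ≤ ⟨r+1, hr1⟩ := by simp [Fin.le_def]
      linarith [he this]
    · by_cases hr : r < k
      · simp only [he', dif_pos hr, dif_neg hr1]
        linarith [he0 ⟨r, hr⟩]
      · simp only [he', dif_neg hr, dif_neg hr1]; linarith
  · simp [hd']
  · simp [he']
  · intro i j
    simp only [hD]
    split
    · split
      · positivity
      · exact le_refl 0
    · exact le_refl 0
  · intro i hik
    have : ∑ j ∈ Finset.range k, D i j = ∑ j : Fin k, (Q ⟨i, hik⟩ j ^ 2 + R ⟨i, hik⟩ j ^ 2) / 2 := by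
      rw [← Fin.sum_univ_eq_sum_range (fun j => D i j) k]
      refine Finset.sum_congr rfl (fun j _ => ?_)
      simp only [hD, dif_pos hik, dif_pos j.isLt, Fin.eta]
    rw [this]
    have h1 := row_norm_le U U' hU hU' ⟨i, hik⟩
    have h2 := row_norm_le V V' hV hV' ⟨i, hik⟩
    rw [← hQ] at h1; rw [← hR] at h2
    calc ∑ j : Fin k, (Q ⟨i, hik⟩ j ^ 2 + R ⟨i, hik⟩ j ^ 2) / 2
        = ((∑ j : Fin k, Q ⟨i, hik⟩ j ^ 2) + ∑ j : Fin k, R ⟨i, hik⟩ j ^ 2) / 2 := by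
          rw [← Finset.sum_add_distrib, Finset.sum_div]
      _ ≤ (1 + 1) / 2 := by linarith
      _ = 1 := by norm_num
  · intro j hjk
    have : ∑ i ∈ Finset.range k, D i j = ∑ i : Fin k, (Q i ⟨j, hjk⟩ ^ 2 + R i ⟨j, hjk⟩ ^ 2) / 2 := by
      rw [← Fin.sum_univ_eq_sum_range (fun i => D i j) k]
      refine Finset.sum_congr rfl (fun i _ => ?_)
      simp only [hD, dif_pos hjk, dif_pos i.isLt, Fin.eta]
    rw [this]
    have h1 := row_norm_le U' U hU' hU ⟨j, hjk⟩
    have h2 := row_norm_le V' V hV' hV ⟨j, hjk⟩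
    have hq1 : ∀ i : Fin k, (U'ᵀ * U) ⟨j, hjk⟩ i = Q i ⟨j, hjk⟩ := by
      intro i; simp [hQ, mul_apply, transpose_apply, mul_comm]
    have hq2 : ∀ i : Fin k, (V'ᵀ * V) ⟨j, hjk⟩ i = R i ⟨j, hjk⟩ := by
      intro i; simp [hR, mul_apply, transpose_apply, mul_comm]
    simp only [hq1] at h1
    simp only [hq2] at h2
    calc ∑ i : Fin k, (Q i ⟨j, hjk⟩ ^ 2 + R i ⟨j, hjk⟩ ^ 2) / 2
        = ((∑ i : Fin k, Q i ⟨j, hjk⟩ ^ 2) + ∑ i : Fin k, R i ⟨j, hjk⟩ ^ 2) / 2 := by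
          rw [← Finset.sum_add_distrib, Finset.sum_div]
      _ ≤ (1 + 1) / 2 := by linarith
      _ = 1 := by norm_num

lemma svd_lin {a b k : ℕ} (U : Matrix (Fin a) (Fin k) ℝ) (V : Matrix (Fin b) (Fin k) ℝ)
    (d e : Fin k → ℝ) (c : ℝ) :
    U * diagonal d * Vᵀ - c • (U * diagonal e * Vᵀ)
      = U * diagonal (fun i => d i - c * e i) * Vᵀ := by
  ext x y
  simp only [Matrix.sub_apply, Matrix.smul_apply, smul_eq_mul, svd_entry]
  rw [Finset.mul_sum, ← Finset.sum_sub_distrib]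
  exact Finset.sum_congr rfl (fun i _ => by ring)

lemma perm_svd {a b k : ℕ} (U : Matrix (Fin a) (Fin k) ℝ) (V : Matrix (Fin b) (Fin k) ℝ)
    (d : Fin k → ℝ) (τ : Equiv.Perm (Fin k)) :
    (U.submatrix id ⇑τ) * diagonal (fun i => d (τ i)) * (V.submatrix id ⇑τ)ᵀ
      = U * diagonal d * Vᵀ := by
  ext x y
  rw [svd_entry, svd_entry]
  simp only [submatrix_apply, id_eq]
  exact Equiv.sum_comp τ (fun i => U x i * d i * V y i)

lemma perm_orth {a k : ℕ} (U : Matrix (Fin a) (Fin k) ℝ) (hU : Uᵀ * U = 1)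
    (τ : Equiv.Perm (Fin k)) : (U.submatrix id ⇑τ)ᵀ * (U.submatrix id ⇑τ) = 1 := by
  ext i j
  have h := congrFun (congrFun hU (τ i)) (τ j)
  simp only [mul_apply, transpose_apply, one_apply, submatrix_apply, id_eq] at h ⊢
  rw [h]
  simp [Equiv.apply_eq_iff_eq]


set_option maxHeartbeats 2000000 in
/-- Descent property of the singular-value penalized iteration (Gaussian case):
with `ρ = ‖X‖₂² < 2 − L_Θ` and iterates `B⁽ʲ⁺¹⁾ = Θ^σ(B⁽ʲ⁾ + XᵀY − XᵀXB⁽ʲ⁾; λ)`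
(given here via an SVD `(U j, σ j, V j)` of the argument at each step), the objective
`F(B) = ‖Y−XB‖_F²/2 + ∑_s P(σ_s(B);λ)` is nonincreasing along the iterates and, for all
`j ≥ 1`, `F(B⁽ʲ⁾) − F(B⁽ʲ⁺¹⁾) ≥ (C/2)‖B⁽ʲ⁾ − B⁽ʲ⁺¹⁾‖_F²` with `C = 2 − L_Θ − ρ`.
(The singular values of `B⁽ʲ⁺¹⁾` are `Θ(σ_j(i); λ)`.) -/
theorem descent_gaussian_iteration {n p m : ℕ}
    (Θ : ℝ → ℝ → ℝ) (hΘ : IsThresholdFunction Θ) (lam : ℝ) (hlam : 0 ≤ lam)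
    (L : ℝ) (hL0 : 0 ≤ L) (hL1 : L ≤ 1)
    (hLmono : ∀ u v : ℝ, 0 < u → u ≤ v →
      sSup {s : ℝ | Θ s lam ≤ u} - (1 - L) * u ≤ sSup {s : ℝ | Θ s lam ≤ v} - (1 - L) * v)
    (P q : ℝ → ℝ)
    (hq : ∀ θ : ℝ, 0 ≤ q θ) (hqΘ : ∀ t : ℝ, q (Θ t lam) = 0)
    (hP : ∀ θ : ℝ,
      P θ - P 0 = (∫ u in (0:ℝ)..|θ|, (sSup {s : ℝ | Θ s lam ≤ u} - u)) + q θ)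
    (Y : Matrix (Fin n) (Fin m) ℝ) (X : Matrix (Fin n) (Fin p) ℝ)
    (ρ : ℝ) (hρdef : ρ = spectralNormSq X) (hρ : ρ < 2 - L)
    (B : ℕ → Matrix (Fin p) (Fin m) ℝ)
    (U : ℕ → Matrix (Fin p) (Fin (min p m)) ℝ)
    (σ : ℕ → Fin (min p m) → ℝ)
    (V : ℕ → Matrix (Fin m) (Fin (min p m)) ℝ)
    (hSVD : ∀ j : ℕ, IsSVD (B j + Xᵀ * Y - Xᵀ * X * B j) (U j) (σ j) (V j))
    (hiter : ∀ j : ℕ, B (j + 1) = U j * diagonal (fun i => Θ (σ j i) lam) * (V j)ᵀ) :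
    ∀ j : ℕ,
      (frobSq (Y - X * B (j + 1)) / 2 + ∑ i, P (Θ (σ j i) lam))
          - (frobSq (Y - X * B (j + 2)) / 2 + ∑ i, P (Θ (σ (j + 1) i) lam))
        ≥ (2 - L - ρ) / 2 * frobSq (B (j + 1) - B (j + 2)) := by
  intro j
  obtain ⟨hodd, hmono, htop, hrange⟩ := hΘ lam hlam
  obtain ⟨hU1o, hV1o, hσ1a, hσ10, -⟩ := hSVD j
  obtain ⟨hU2o, hV2o, hσ2a, hσ20, hξsvd⟩ := hSVD (j+1)
  set Z := B (j+1) with hZdef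
  set Bh := B (j+2) with hBhdef
  set ξ := Z + Xᵀ*Y - Xᵀ*X*Z with hξdef
  set bsig : Fin (min p m) → ℝ := fun i => Θ (σ j i) lam with hbsig
  set th : Fin (min p m) → ℝ := fun i => Θ (σ (j+1) i) lam with hthdef
  have hZsvd : Z = U j * diagonal bsig * (V j)ᵀ := by
    rw [hZdef, hbsig]; exact hiter j
  have hBhsvd : Bh = U (j+1) * diagonal th * (V (j+1))ᵀ := by
    rw [hBhdef, hthdef]; exact hiter (j+1)
  have hb0 : ∀ i, 0 ≤ bsig i := fun i => (hrange _ (hσ10 i)).1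
  have hba : Antitone bsig := fun i1 i2 h => hmono (hσ1a h)
  have hth0 : ∀ i, 0 ≤ th i := fun i => (hrange _ (hσ20 i)).1
  have hthle : ∀ i, th i ≤ σ (j+1) i := fun i => (hrange _ (hσ20 i)).2
  -- basic Frobenius computations
  have hfr1 : frobSq ξ = ∑ i, (σ (j+1) i)^2 := by
    rw [hξsvd]; exact frobSq_svd _ _ _ hU2o hV2o
  have hfr2 : frobSq Z = ∑ i, bsig i^2 := by
    rw [hZsvd]; exact frobSq_svd _ _ _ hU1o hV1o
  have hfr3 : frobSq Bh = ∑ i, th i^2 := by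
    rw [hBhsvd]; exact frobSq_svd _ _ _ hU2o hV2o
  have hfr4 : finner ξ Bh = ∑ i, σ (j+1) i * th i := by
    rw [hξsvd, hBhsvd]; exact finner_svd_same _ _ _ _ hU2o hV2o
  have hXadj : ξ - Z = Xᵀ * (Y - X * Z) := by
    rw [hξdef, Matrix.mul_sub, ← Matrix.mul_assoc]; abel
  have hIP : finner (Y - X*Z) (X*(Bh - Z)) = finner (ξ - Z) (Bh - Z) := by
    rw [finner_adjoint, ← hXadj]
  have h1 : frobSq (Y - X*Bh)
      = frobSq (Y - X*Z) - 2 * finner (ξ - Z) (Bh - Z) + frobSq (X*(Bh - Z)) := by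
    have hd : Y - X*Bh = (Y - X*Z) - X*(Bh - Z) := by rw [Matrix.mul_sub]; abel
    rw [hd, frobSq_sub, hIP]
  have h2 : frobSq (X*(Bh - Z)) ≤ ρ * frobSq (Bh - Z) := by
    rw [hρdef]; exact frobSq_mul_le X _
  have h3 : 2 * finner (ξ - Z) (Bh - Z)
      = frobSq (ξ - Z) + frobSq (Bh - Z) - frobSq (ξ - Bh) := by
    have e : frobSq (ξ - Bh) = frobSq ((ξ - Z) - (Bh - Z)) := by
      rw [sub_sub_sub_cancel_right]
    rw [e, frobSq_sub (ξ - Z) (Bh - Z)]; ring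
  have h4 : frobSq (ξ - Z) = (∑ i, (σ (j+1) i)^2) - 2 * finner ξ Z + ∑ i, bsig i^2 := by
    rw [frobSq_sub, hfr1, hfr2]
  have h5 : frobSq (Bh - Z) = (∑ i, th i^2) - 2 * finner Bh Z + ∑ i, bsig i^2 := by
    rw [frobSq_sub, hfr3, hfr2]
  have h6 : frobSq (ξ - Bh)
      = (∑ i, (σ (j+1) i)^2) - 2 * (∑ i, σ (j+1) i * th i) + ∑ i, th i^2 := by
    rw [frobSq_sub, hfr1, hfr4, hfr3]
  -- sorting permutation for m'
  set m' : Fin (min p m) → ℝ := fun i => σ (j+1) i - (1-L) * th i with hm'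
  set τ : Equiv.Perm (Fin (min p m)) := (Fin.revPerm).trans (Tuple.sort m') with hτ
  have hτapp : ∀ i, τ i = Tuple.sort m' (Fin.revPerm i) := fun i => rfl
  have hma : Antitone (fun i => m' (τ i)) := by
    intro i1 i2 h12
    have h := Tuple.monotone_sort m' (Fin.rev_le_rev.mpr h12)
    simpa [hτapp, Function.comp] using h
  have hm'0 : ∀ i, 0 ≤ m' i := by
    intro i
    have h1' := hth0 i
    have h2' := hthle i
    simp only [hm']
    nlinarith
  set c : Fin (min p m) → ℝ := fun i => bsig (τ.symm i) with hcdef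
  have hc0 : ∀ i, 0 ≤ c i := fun i => hb0 _
  -- von Neumann bound
  have hMsvd : ξ - (1-L) • Bh = U (j+1) * diagonal m' * (V (j+1))ᵀ := by
    rw [hξsvd, hBhsvd, svd_lin, ← hm']
  have hVN : finner Z (ξ - (1-L) • Bh) ≤ ∑ r, bsig r * m' (τ r) := by
    rw [hMsvd, ← perm_svd (U (j+1)) (V (j+1)) m' τ, hZsvd]
    exact vonNeumann _ _ _ _ _ _ hU1o (perm_orth _ hU2o τ) hV1o (perm_orth _ hV2o τ)
      hba hma hb0 (fun i => hm'0 _)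
  have hKI : finner ξ Z - (1-L) * finner Bh Z ≤ ∑ i, c i * m' i := by
    have e1 := finner_sub_smul_right Z ξ Bh (1-L)
    have e2 : ∑ i, c i * m' i = ∑ r, bsig r * m' (τ r) := by
      rw [← Equiv.sum_comp τ (fun i => c i * m' i)]
      refine Finset.sum_congr rfl (fun r _ => ?_)
      simp [hcdef]
    rw [e2]
    calc finner ξ Z - (1-L) * finner Bh Z
        = finner Z ξ - (1-L) * finner Z Bh := by
          rw [finner_comm ξ Z, finner_comm Bh Z]
      _ = finner Z (ξ - (1-L) • Bh) := e1.symm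
      _ ≤ ∑ r, bsig r * m' (τ r) := hVN
  -- scalar penalty inequality
  have h8 : ∑ i, ((th i - σ (j+1) i)^2/2 - (c i - σ (j+1) i)^2/2 + (1-L)/2 * (c i - th i)^2)
      ≤ (∑ i, P (c i)) - ∑ i, P (th i) := by
    rw [← Finset.sum_sub_distrib]
    refine Finset.sum_le_sum (fun i _ => ?_)
    have hsk := scalar_key Θ lam hodd hmono htop hrange L hL0 hL1 hLmono P q hq hqΘ hP
      (σ (j+1) i) (c i) (hσ20 i) (hc0 i)
    have hthi : th i = Θ (σ (j+1) i) lam := by rw [hthdef]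
    rw [hthi]
    linarith [hsk]
  -- sum expansions
  have hexp8 : ∑ i, ((th i - σ (j+1) i)^2/2 - (c i - σ (j+1) i)^2/2 + (1-L)/2 * (c i - th i)^2)
      = (2-L)/2 * (∑ i, th i^2) - (∑ i, σ (j+1) i * th i) - L/2 * (∑ i, c i^2)
        + (∑ i, c i * σ (j+1) i) - (1-L) * ∑ i, c i * th i := by
    rw [Finset.sum_congr rfl (fun i (_ : i ∈ Finset.univ) => (by ring :
      (th i - σ (j+1) i)^2/2 - (c i - σ (j+1) i)^2/2 + (1-L)/2 * (c i - th i)^2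
        = (2-L)/2 * th i^2 - σ (j+1) i * th i - L/2 * c i^2 + c i * σ (j+1) i
          - (1-L) * (c i * th i)))]
    simp only [Finset.sum_add_distrib, Finset.sum_sub_distrib, ← Finset.mul_sum]
  have hexpm : ∑ i, c i * m' i
      = (∑ i, c i * σ (j+1) i) - (1-L) * ∑ i, c i * th i := by
    rw [Finset.sum_congr rfl (fun i (_ : i ∈ Finset.univ) => (by simp only [hm']; ring :
      c i * m' i = c i * σ (j+1) i - (1-L) * (c i * th i)))]
    rw [Finset.sum_sub_distrib, ← Finset.mul_sum]
  have hsum1 : ∑ i, c i^2 = ∑ i, bsig i^2 := by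
    rw [← Equiv.sum_comp τ.symm (fun r => bsig r ^ 2)]
  have hsum2 : ∑ i, P (c i) = ∑ i, P (bsig i) := by
    rw [← Equiv.sum_comp τ.symm (fun r => P (bsig r))]
  -- bridge goal sums
  have hgb : ∑ i, P (Θ (σ j i) lam) = ∑ i, P (bsig i) := by simp only [hbsig]
  have hgt : ∑ i, P (Θ (σ (j+1) i) lam) = ∑ i, P (th i) := by simp only [hthdef]
  have hZB : frobSq (Z - Bh) = (∑ i, th i^2) - 2 * finner Bh Z + ∑ i, bsig i^2 := by
    rw [frobSq_sub_comm, h5]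
  rw [ge_iff_le, hgb, hgt, hZB]
  rw [h5] at h2
  rw [hsum1] at hexp8
  rw [hsum2] at h8
  linarith [h1, h2, h3, h4, h6, hKI, h8, hexp8, hexpm, hsum1, hsum2]
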